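/- (i) For each t ∈ [1,n], the right-going lines of ℓ(D) labelled ∗ issuing from b(t) are exactly the lines joining b(t) to b(s) for s ∈ s_S(t). (ii) For each s ∈ [1,n], there is at most one left-going line of ℓ(D) labelled ∗ ending at b(s); it exists precisely when s ∈ s_S(t) for some t ∈ [1,n], and in that case it joins b(t) to b(s). -/

import Mathlib

open scoped Classical

/-- height of column `j` of the diagram (columns numbered from 1). -/
def hgt (c : List ℕ) (j : ℕ) : ℕ := c.getD (j - 1) 0

/-- number of boxes in the columns strictly to the left of column `j`. -/
def off (c : List ℕ) (j : ℕ) : ℕ := (c.take (j - 1)).sum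

/-- `(i, j)` (row `i`, column `j`) is a box of the diagram `D`. -/
def IsBox (c : List ℕ) (i j : ℕ) : Prop :=
  1 ≤ j ∧ j ≤ c.length ∧ 1 ≤ i ∧ i ≤ hgt c j

/-- the entry of the box `(i, j)` in the tableau `T`. -/
def Tentry (c : List ℕ) (i j : ℕ) : ℕ := off c j + i

/-- the column of the box of `D` carrying entry `m` in `T`. -/
noncomputable def colOf (c : List ℕ) (m : ℕ) : ℕ := sInf {j | m ≤ (c.take j).sum}

/-- the row of the box of `D` carrying entry `m` in `T`. -/
noncomputable def rowOf (c : List ℕ) (m : ℕ) : ℕ := m - off c (colOf c m)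

/-- the total order `≼` on entries: increasing down columns, then from right to left. -/
def ple (c : List ℕ) (a b : ℕ) : Prop :=
  colOf c b < colOf c a ∨ (colOf c a = colOf c b ∧ a ≤ b)

/-- the strict version of `≼`. -/
def plt (c : List ℕ) (a b : ℕ) : Prop :=
  colOf c b < colOf c a ∨ (colOf c a = colOf c b ∧ a < b)

/-- column `j` has a left neighbour in `D`. -/
def HasLeftNb (c : List ℕ) (j : ℕ) : Prop :=
  ∃ i, 1 ≤ i ∧ i < j ∧ hgt c i = hgt c j ∧
    ∀ i', i < i' → i' < j → hgt c i' ≠ hgt c j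

/-- the `j`-th column of the tableau `T`, rows to optional entries. -/
def Tcol (c : List ℕ) (j : ℕ) : ℕ → Option ℕ := fun i =>
  if 1 ≤ i ∧ i ≤ hgt c j then some (Tentry c i j) else none

/-- one step of the propagation rule building `T(∞)`: the entry (if any) in row `t`
of column `j - 1` of `T(∞)` (given by `prev`) is propagated into the partially
built column `j` (given by `cur`). -/
noncomputable def propStep (c : List ℕ) (j : ℕ) (prev : ℕ → Option ℕ)
    (cur : ℕ → Option ℕ) (t : ℕ) : ℕ → Option ℕ :=
  match prev t with
  | none => cur
  | some l =>
    if hgt c j = t then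
      if HasLeftNb c j ∧ cur (t + 1) = none then
        Function.update cur (t + 1) (some l)
      else cur
    else
      if cur t = none then Function.update cur t (some l) else cur

/-- the `j`-th column of the composition tableau `T(∞)`. -/
noncomputable def TinfCol (c : List ℕ) : ℕ → ℕ → Option ℕ
  | 0 => fun _ => none
  | 1 => Tcol c 1
  | j + 2 =>
      (List.range (c.sum + 2)).foldl
        (propStep c (j + 2) (TinfCol c (j + 1))) (Tcol c (j + 2))

/-- labels of lines: `1` or `∗`. -/
inductive Lab : Type
  | one : Lab
  | star : Lab
deriving DecidableEq

/-- maximal height among the columns `1, …, j - 1`. -/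
def maxHgt (c : List ℕ) (j : ℕ) : ℕ := (c.take (j - 1)).foldr max 0

/-- the maximal column height of the diagram `D`. -/
def maxH (c : List ℕ) : ℕ := c.foldr max 0

/-- `LineB c a i j lab` : the line family `ℓ(D)` contains a line labelled `lab`
whose left end-point is the box of `D` carrying entry `a` in `T` and whose right
end-point is the box `(i, j)` (row `i` of column `C_j`). -/
def LineB (c : List ℕ) (a i j : ℕ) (lab : Lab) : Prop :=
  2 ≤ j ∧ j ≤ c.length ∧ 1 ≤ i ∧
    (match lab with
     | Lab.one =>
         (maxHgt c j < hgt c j ∧ i ≤ maxHgt c j + 1 ∧ TinfCol c (j - 1) i = some a)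
       ∨ (hgt c j ≤ maxHgt c j ∧ i + 1 ≤ hgt c j ∧ TinfCol c (j - 1) i = some a)
       ∨ (hgt c j ≤ maxHgt c j ∧ i = hgt c j ∧
           ¬(∃ j', 1 ≤ j' ∧ j' < j ∧ hgt c j' = hgt c j) ∧
           TinfCol c (j - 1) i = some a)
       ∨ (hgt c j ≤ maxHgt c j ∧ i = hgt c j ∧
           (∃ j', 1 ≤ j' ∧ j' < j ∧ hgt c j' = hgt c j) ∧
           TinfCol c (j - 1) (i + 1) = some a)
     | Lab.star =>
         hgt c j ≤ maxHgt c j ∧ i = hgt c j ∧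
           (∃ j', 1 ≤ j' ∧ j' < j ∧ hgt c j' = hgt c j) ∧
           TinfCol c (j - 1) i = some a)

/-- `LineE c a b lab` : `ℓ(D)` contains a line labelled `lab` joining the box of `D`
carrying entry `a` in `T` (on the left) to the box carrying entry `b` (on the right). -/
def LineE (c : List ℕ) (a b : ℕ) (lab : Lab) : Prop :=
  ∃ i j, LineB c a i j lab ∧ b = Tentry c i j

/-- the box `(i, j)` of `D` is right extremal relative to `ℓ(D)`. -/
def RExt (c : List ℕ) (i j : ℕ) : Prop :=
  IsBox c i j ∧ ∀ i' j', ¬ LineB c (Tentry c i j) i' j' Lab.one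

/-- `c` is a composition of `n`. -/
def IsComposition (c : List ℕ) (n : ℕ) : Prop :=
  c.sum = n ∧ ∀ x ∈ c, 0 < x

/-- the set `s_S(t)` of steps of the profile staircase `s(t)`: whenever the entry `t`
descends one row on entering column `j` (a column of height `u` with `t` in row `u`
of column `j - 1` of `T(∞)` and in row `u + 1` of column `j`), the `T`-entry of the
box `R_u ∩ C_j` directly above is a step of `s(t)`. -/
def StepsOf (c : List ℕ) (t : ℕ) : Set ℕ :=
  {s | ∃ j, 2 ≤ j ∧ j ≤ c.length ∧
      TinfCol c (j - 1) (hgt c j) = some t ∧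
      TinfCol c j (hgt c j + 1) = some t ∧
      s = Tentry c (hgt c j) j}

section Aux

variable {c : List ℕ}

lemma hgt_le_sum (c : List ℕ) (j : ℕ) : hgt c j ≤ c.sum := by
  unfold hgt
  rcases lt_or_ge (j - 1) c.length with h | h
  · rw [List.getD_eq_getElem _ _ h]
    exact List.single_le_sum (fun x _ => Nat.zero_le x) _ (List.getElem_mem h)
  · rw [List.getD_eq_default _ _ h]
    exact Nat.zero_le _

lemma propStep_untouched {prev cur : ℕ → Option ℕ} {j t' p : ℕ}
    (h1 : p = t' → hgt c j = t') (h2 : p = t' + 1 → hgt c j ≠ t') :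
    propStep c j prev cur t' p = cur p := by
  unfold propStep
  cases hpt : prev t' with
  | none => rfl
  | some l =>
    simp only
    split_ifs with hh hcond hcur
    · exact Function.update_of_ne (fun hp => h2 hp hh) _ _
    · rfl
    · exact Function.update_of_ne (fun hp => (hh (h1 hp)).elim) _ _
    · rfl

lemma propStep_persist {prev cur : ℕ → Option ℕ} {j t' p : ℕ} {x : ℕ}
    (h : cur p = some x) : propStep c j prev cur t' p = some x := by
  unfold propStep
  cases hpt : prev t' with
  | none => exact h
  | some l =>
    simp only
    split_ifs with hh hcond hcur
    · rcases hcond with ⟨-, hc0⟩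
      rw [Function.update_apply]
      split_ifs with hp
      · rw [hp] at h; rw [h] at hc0; exact absurd hc0 (by simp)
      · exact h
    · exact h
    · rw [Function.update_apply]
      split_ifs with hp
      · rw [hp] at h; rw [h] at hcur; exact absurd hcur (by simp)
      · exact h
    · exact h

lemma propStep_self {prev cur : ℕ → Option ℕ} {j p : ℕ} :
    propStep c j prev cur p p =
      if hgt c j = p then cur p else (cur p).or (prev p) := by
  unfold propStep
  cases hpt : prev p with
  | none => simp
  | some l =>
    simp only
    split_ifs with hh hcond hcur
    · exact Function.update_of_ne (by omega) _ _
    · rfl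
    · rw [Function.update_self, hcur]; rfl
    · cases hc : cur p with
      | none => exact absurd hc hcur
      | some y => rfl

lemma foldl_propStep_untouched {prev : ℕ → Option ℕ} {j p : ℕ} (L : List ℕ)
    (cur : ℕ → Option ℕ)
    (H : ∀ t' ∈ L, (p = t' → hgt c j = t') ∧ (p = t' + 1 → hgt c j ≠ t')) :
    L.foldl (propStep c j prev) cur p = cur p := by
  induction L generalizing cur with
  | nil => rfl
  | cons a L ih =>
    rw [List.foldl_cons, ih _ (fun t' ht => H t' (List.mem_cons_of_mem _ ht))]
    exact propStep_untouched (H a List.mem_cons_self).1 (H a List.mem_cons_self).2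

lemma foldl_propStep_persist {prev : ℕ → Option ℕ} {j p x : ℕ} (L : List ℕ)
    (cur : ℕ → Option ℕ) (h : cur p = some x) :
    L.foldl (propStep c j prev) cur p = some x := by
  induction L generalizing cur with
  | nil => exact h
  | cons a L ih => exact ih _ (propStep_persist h)

end Aux
section Aux2

variable {c : List ℕ}

lemma tinf_fold_eval {prev cur0 : ℕ → Option ℕ} {j p N : ℕ}
    (hpN : p < N) (hne : p ≠ hgt c j + 1) :
    (List.range N).foldl (propStep c j prev) cur0 p =
      if hgt c j = p then cur0 p else (cur0 p).or (prev p) := by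
  have hsplit : N = (p + 1) + (N - (p + 1)) := by omega
  rw [hsplit, List.range_add, List.foldl_append, List.range_succ, List.foldl_append]
  have hmid : (List.range p).foldl (propStep c j prev) cur0 p = cur0 p := by
    apply foldl_propStep_untouched
    intro t' ht'
    have := List.mem_range.mp ht'
    exact ⟨fun he => by omega, fun he hh => hne (by omega)⟩
  have houter : ∀ cur : ℕ → Option ℕ,
      ((List.range (N - (p+1))).map ((p+1) + ·)).foldl (propStep c j prev) cur p = cur p := by
    intro cur
    apply foldl_propStep_untouched
    intro t' ht'
    rcases List.mem_map.mp ht' with ⟨x, -, rfl⟩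
    exact ⟨fun he => by omega, fun he => by omega⟩
  rw [houter, List.foldl_cons, List.foldl_nil, propStep_self, hmid]

lemma tinf_fold_step {prev cur0 : ℕ → Option ℕ} {j N : ℕ}
    (hN : hgt c j + 2 ≤ N) (h0 : cur0 (hgt c j + 1) = none) :
    (List.range N).foldl (propStep c j prev) cur0 (hgt c j + 1) =
      (if HasLeftNb c j ∧ (prev (hgt c j)).isSome then prev (hgt c j) else none).or
        (prev (hgt c j + 1)) := by
  set h := hgt c j with hh
  have hsplit : N = (h + 2) + (N - (h + 2)) := by omega
  rw [hsplit, List.range_add, List.foldl_append]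
  have hr2 : List.range (h + 2) = (List.range h ++ [h]) ++ [h + 1] := by
    rw [← List.range_succ, ← List.range_succ]
  rw [hr2, List.foldl_append, List.foldl_append]
  have hmid : (List.range h).foldl (propStep c j prev) cur0 (h + 1) = none := by
    rw [foldl_propStep_untouched]
    · exact h0
    · intro t' ht'
      have := List.mem_range.mp ht'
      exact ⟨fun he => by omega, fun he => by omega⟩
  set mid := (List.range h).foldl (propStep c j prev) cur0 with hmiddef
  have hstepA : ([h].foldl (propStep c j prev) mid) (h + 1) =
      if HasLeftNb c j ∧ (prev h).isSome then prev h else none := by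
    rw [List.foldl_cons, List.foldl_nil]
    unfold propStep
    cases hpt : prev h with
    | none => simp [hmid, hpt]
    | some l =>
      simp only [hpt, Option.isSome_some, and_true]
      rw [if_pos hh.symm]
      by_cases hln : HasLeftNb c j
      · rw [if_pos ⟨hln, hmid⟩, Function.update_self, if_pos hln]
      · rw [if_neg (fun hc => hln hc.1), hmid, if_neg hln]
  set A := [h].foldl (propStep c j prev) mid with hAdef
  have hstepB : ([h + 1].foldl (propStep c j prev) A) (h + 1) =
      (A (h + 1)).or (prev (h + 1)) := by
    rw [List.foldl_cons, List.foldl_nil, propStep_self, if_neg (by omega)]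
  set B := [h + 1].foldl (propStep c j prev) A with hBdef
  have houter : ((List.range (N - (h + 2))).map ((h + 2) + ·)).foldl
      (propStep c j prev) B (h + 1) = B (h + 1) := by
    apply foldl_propStep_untouched
    intro t' ht'
    rcases List.mem_map.mp ht' with ⟨x, -, rfl⟩
    exact ⟨fun he => by omega, fun he => by omega⟩
  rw [houter, hstepB, hstepA]

lemma tinf_fold_high {prev cur0 : ℕ → Option ℕ} {j p N : ℕ}
    (hN : hgt c j + 2 ≤ N) (hp : N ≤ p) :
    (List.range N).foldl (propStep c j prev) cur0 p = cur0 p := by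
  apply foldl_propStep_untouched
  intro t' ht'
  have := List.mem_range.mp ht'
  exact ⟨fun he => by omega, fun he hh => by omega⟩

end Aux2
section Aux3

variable {c : List ℕ}

lemma take_sum_succ (c : List ℕ) (k : ℕ) :
    (c.take (k + 1)).sum = (c.take k).sum + c.getD k 0 := by
  rw [List.take_succ, List.sum_append]
  cases h : getElem? c k with
  | none => simp [List.getD_eq_getElem?_getD, h]
  | some a => simp [List.getD_eq_getElem?_getD, h]

lemma take_sum_mono {m m' : ℕ} (h : m ≤ m') : (c.take m).sum ≤ (c.take m').sum := by
  induction m' with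
  | zero =>
    have : m = 0 := Nat.le_zero.mp h
    simp [this]
  | succ k ih =>
    rcases Nat.lt_or_ge m (k + 1) with h' | h'
    · exact le_trans (ih (by omega)) (by rw [take_sum_succ]; exact Nat.le_add_right _ _)
    · have hm : m = k + 1 := by omega
      subst hm; exact le_refl _

lemma take_sum_lt (hpos : ∀ x ∈ c, 0 < x) {m m' : ℕ} (h : m < m') (hm : m < c.length) :
    (c.take m).sum < (c.take m').sum := by
  have h1 : (c.take (m + 1)).sum = (c.take m).sum + c.getD m 0 := take_sum_succ c m
  have h2 : 0 < c.getD m 0 := by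
    rw [List.getD_eq_getElem _ _ hm]
    exact hpos _ (List.getElem_mem hm)
  have h3 : (c.take (m + 1)).sum ≤ (c.take m').sum := take_sum_mono (by omega)
  omega

lemma hgt_pos (hpos : ∀ x ∈ c, 0 < x) {j : ℕ} (h1 : 1 ≤ j) (h2 : j ≤ c.length) :
    1 ≤ hgt c j := by
  unfold hgt
  have hm : j - 1 < c.length := by omega
  rw [List.getD_eq_getElem _ _ hm]
  exact hpos _ (List.getElem_mem hm)

lemma Tentry_hgt_eq (c : List ℕ) {j : ℕ} (h1 : 1 ≤ j) :
    Tentry c (hgt c j) j = (c.take j).sum := by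
  unfold Tentry off hgt
  have : j = (j - 1) + 1 := by omega
  rw [this, take_sum_succ]
  simp

lemma le_foldr_max {a : ℕ} {L : List ℕ} (h : a ∈ L) : a ≤ L.foldr max 0 := by
  induction L with
  | nil => simp at h
  | cons b L ih =>
    rcases List.mem_cons.mp h with rfl | h'
    · exact le_max_left _ _
    · exact le_trans (ih h') (le_max_right _ _)

lemma hgt_le_maxHgt {j' j : ℕ} (h1 : 1 ≤ j') (h2 : j' < j) (hlen : j' ≤ c.length) :
    hgt c j' ≤ maxHgt c j := by
  unfold hgt maxHgt
  apply le_foldr_max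
  have hm : j' - 1 < (c.take (j - 1)).length := by
    rw [List.length_take]; omega
  rw [List.getD_eq_getElem _ _ (by omega)]
  rw [List.getElem_take' (xs := c) (by omega) (j := j - 1) (by omega)]
  exact List.getElem_mem hm

lemma hasLeftNb_of_exists {j : ℕ}
    (h : ∃ j', 1 ≤ j' ∧ j' < j ∧ hgt c j' = hgt c j) : HasLeftNb c j := by
  classical
  rcases h with ⟨j0, hj1, hj2, hj3⟩
  set P : ℕ → Prop := fun i => 1 ≤ i ∧ hgt c i = hgt c j with hP
  have hex : P j0 := ⟨hj1, hj3⟩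
  set i0 := Nat.findGreatest P (j - 1) with hi0
  have hPi0 : P i0 := Nat.findGreatest_spec (m := j0) (by omega) hex
  refine ⟨i0, hPi0.1, by
      have := Nat.findGreatest_le (P := P) (n := j - 1); omega, hPi0.2, ?_⟩
  intro i' hlt hlt' heq
  have : ¬ P i' := Nat.findGreatest_is_greatest hlt (by omega)
  exact this ⟨by omega, heq⟩

lemma exists_of_hasLeftNb {j : ℕ} (h : HasLeftNb c j) :
    ∃ j', 1 ≤ j' ∧ j' < j ∧ hgt c j' = hgt c j := by
  rcases h with ⟨i, h1, h2, h3, -⟩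
  exact ⟨i, h1, h2, h3⟩

lemma TinfCol_eq_fold {k : ℕ} (hk : 2 ≤ k) :
    TinfCol c k = (List.range (c.sum + 2)).foldl
      (propStep c k (TinfCol c (k - 1))) (Tcol c k) := by
  obtain ⟨m, rfl⟩ : ∃ m, k = m + 2 := ⟨k - 2, by omega⟩
  have : m + 2 - 1 = m + 1 := by omega
  rw [this]
  rfl

end Aux3
section Aux4

variable {c : List ℕ}

/-- invariant for the columns of `T(∞)`. -/
def ColInv (c : List ℕ) (j : ℕ) : Prop :=
  (∀ i, 1 ≤ i → i ≤ hgt c j → TinfCol c j i = some (Tentry c i j)) ∧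
  TinfCol c j 0 = none ∧
  (∀ i t, TinfCol c j i = some t → t ≤ (c.take j).sum) ∧
  (∀ i, c.sum + 2 ≤ i → TinfCol c j i = none) ∧
  (∀ u v t, TinfCol c j u = some t → TinfCol c j v = some t → u = v)

lemma TinfCol_one : TinfCol c 1 = Tcol c 1 := rfl

lemma Tentry_one (i : ℕ) : Tentry c i 1 = i := by
  unfold Tentry off
  simp

lemma hgt_le_take_sum {j : ℕ} (h1 : 1 ≤ j) : hgt c j ≤ (c.take j).sum := by
  have h2 : (c.take j).sum = (c.take (j - 1)).sum + c.getD (j - 1) 0 := by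
    have : j = (j - 1) + 1 := by omega
    rw [this, take_sum_succ]
    simp
  unfold hgt
  omega

lemma colInv_one : ColInv c 1 := by
  refine ⟨?_, ?_, ?_, ?_, ?_⟩
  · intro i h1 h2
    rw [TinfCol_one]
    unfold Tcol
    exact if_pos ⟨h1, h2⟩
  · rw [TinfCol_one]; unfold Tcol; exact if_neg (by omega)
  · intro i t h
    rw [TinfCol_one] at h
    unfold Tcol at h
    split_ifs at h with hi
    · have := hgt_le_take_sum (c := c) (j := 1) le_rfl
      rw [Tentry_one] at h
      have ht : t = i := (Option.some_inj.mp h).symm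
      omega
  · intro i hi
    rw [TinfCol_one]
    unfold Tcol
    refine if_neg ?_
    have := hgt_le_sum c 1
    omega
  · intro u v t hu hv
    rw [TinfCol_one] at hu hv
    unfold Tcol at hu hv
    split_ifs at hu with h1
    split_ifs at hv with h2
    rw [Tentry_one] at hu hv
    have := Option.some_inj.mp hu
    have := Option.some_inj.mp hv
    omega

lemma Tcol_none_of_gt {j i : ℕ} (h : hgt c j < i) : Tcol c j i = none := by
  unfold Tcol
  exact if_neg (by omega)

/-- source characterization for entries of column `k+1` of `T(∞)`. -/
lemma tinf_source {k : ℕ} (hk : 1 ≤ k) (hinv : ColInv c k) {u t : ℕ}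
    (hu : TinfCol c (k + 1) u = some t) :
    (1 ≤ u ∧ u ≤ hgt c (k + 1) ∧ t = Tentry c u (k + 1)) ∨
    (hgt c (k + 1) + 1 ≤ u ∧ ∃ a, TinfCol c k a = some t ∧
      (a = u ∨ (u = hgt c (k + 1) + 1 ∧ a = hgt c (k + 1) ∧ HasLeftNb c (k + 1)))) := by
  have hfold := TinfCol_eq_fold (c := c) (k := k + 1) (by omega)
  have hk1 : k + 1 - 1 = k := by omega
  rw [hk1] at hfold
  set h' := hgt c (k + 1) with hh'
  have hN : h' + 2 ≤ c.sum + 2 := by have := hgt_le_sum c (k + 1); omega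
  rcases Nat.lt_or_ge u (h' + 1) with hcase | hcase
  · -- u ≤ h'
    rcases Nat.eq_zero_or_pos u with rfl | hu1
    · -- u = 0 : value is none
      exfalso
      rw [hfold, tinf_fold_eval (by omega) (by omega)] at hu
      split_ifs at hu with hgt0
      · unfold Tcol at hu
        rw [if_neg (by omega)] at hu
        cases hu
      · unfold Tcol at hu
        rw [if_neg (by omega), Option.none_or] at hu
        rw [hinv.2.1] at hu
        cases hu
    · left
      have := foldl_propStep_persist (c := c) (prev := TinfCol c k) (j := k + 1)
        (L := List.range (c.sum + 2)) (cur := Tcol c (k + 1)) (x := Tentry c u (k + 1))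
        (p := u) (by unfold Tcol; exact if_pos ⟨hu1, by omega⟩)
      rw [hfold, this] at hu
      exact ⟨hu1, by omega, (Option.some_inj.mp hu).symm⟩
  · right
    refine ⟨hcase, ?_⟩
    rcases Nat.lt_or_ge u (h' + 2) with hcase2 | hcase2
    · -- u = h' + 1
      have hueq : u = h' + 1 := by omega
      subst hueq
      rw [hfold, tinf_fold_step (by omega) (Tcol_none_of_gt (by omega))] at hu
      rcases Option.or_eq_some_iff.mp hu with h1 | ⟨h1, h2⟩
      · by_cases hcond : HasLeftNb c (k + 1) ∧ (TinfCol c k h').isSome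
        · rw [if_pos hcond] at h1
          exact ⟨h', h1, Or.inr ⟨rfl, rfl, hcond.1⟩⟩
        · rw [if_neg hcond] at h1
          cases h1
      · exact ⟨h' + 1, h2, Or.inl rfl⟩
    · -- u ≥ h' + 2
      rcases Nat.lt_or_ge u (c.sum + 2) with hcase3 | hcase3
      · rw [hfold, tinf_fold_eval hcase3 (by omega), if_neg (by omega),
          Tcol_none_of_gt (by omega), Option.none_or] at hu
        exact ⟨u, hu, Or.inl rfl⟩
      · exfalso
        rw [hfold, tinf_fold_high hN hcase3, Tcol_none_of_gt (by omega)] at hu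
        cases hu

lemma Tentry_gt {u k : ℕ} (hu : 1 ≤ u) : (c.take k).sum < Tentry c u (k + 1) := by
  unfold Tentry off
  have : k + 1 - 1 = k := by omega
  rw [this]
  omega

lemma colInv_succ {k : ℕ} (hk : 1 ≤ k) (hinv : ColInv c k) : ColInv c (k + 1) := by
  obtain ⟨htop, hzero, hbound, hhigh, hinj⟩ := hinv
  have hfold := TinfCol_eq_fold (c := c) (k := k + 1) (by omega)
  have hk1 : k + 1 - 1 = k := by omega
  rw [hk1] at hfold
  set h' := hgt c (k + 1) with hh'
  have hN : h' + 2 ≤ c.sum + 2 := by have := hgt_le_sum c (k + 1); omega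
  have htake : (c.take (k + 1)).sum = (c.take k).sum + h' := by
    rw [take_sum_succ]; rfl
  refine ⟨?_, ?_, ?_, ?_, ?_⟩
  · intro i h1 h2
    rw [hfold]
    exact foldl_propStep_persist _ _ (by unfold Tcol; exact if_pos ⟨h1, h2⟩)
  · rw [hfold, tinf_fold_eval (by omega) (by omega)]
    split_ifs with hgt0
    · unfold Tcol; exact if_neg (by omega)
    · unfold Tcol
      rw [if_neg (by omega), Option.none_or]
      exact hzero
  · intro i t h
    rcases tinf_source hk ⟨htop, hzero, hbound, hhigh, hinj⟩ h with
      ⟨h1, h2, rfl⟩ | ⟨h1, a, ha, -⟩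
    · unfold Tentry off
      rw [hk1]
      omega
    · exact le_trans (hbound a t ha) (take_sum_mono (by omega))
  · intro i hi
    rw [hfold, tinf_fold_high hN hi]
    exact Tcol_none_of_gt (by omega)
  · intro u v t hu hv
    have Hinv : ColInv c k := ⟨htop, hzero, hbound, hhigh, hinj⟩
    rcases tinf_source hk Hinv hu with ⟨hu1, hu2, hte⟩ | ⟨hu1, a, ha, hac⟩ <;>
      rcases tinf_source hk Hinv hv with ⟨hv1, hv2, hte'⟩ | ⟨hv1, b, hb, hbc⟩
    · -- both T-entries
      rw [hte'] at hte
      unfold Tentry at hte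
      omega
    · exfalso
      have := hbound b t hb
      have := Tentry_gt (c := c) (k := k) hu1
      rw [← hte] at this
      omega
    · exfalso
      have := hbound a t ha
      have := Tentry_gt (c := c) (k := k) hv1
      rw [← hte'] at this
      omega
    · have hab : a = b := hinj a b t ha hb
      rcases hac with rfl | ⟨hu3, ha3, -⟩ <;> rcases hbc with rfl | ⟨hv3, hb3, -⟩
      · exact hab
      · omega
      · omega
      · omega

lemma colInv_all {k : ℕ} (hk : 1 ≤ k) : ColInv c k := by
  induction k with
  | zero => omega
  | succ m ih =>
    rcases Nat.eq_zero_or_pos m with rfl | hm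
    · exact colInv_one
    · exact colInv_succ hm (ih hm)

end Aux4
section Aux5

variable {c : List ℕ}

lemma star_line_iff (hpos : ∀ x ∈ c, 0 < x) (t s : ℕ) :
    LineE c t s Lab.star ↔ s ∈ StepsOf c t := by
  constructor
  · rintro ⟨i, j, ⟨hj2, hjlen, hi1, hmax, hieq, hex, hprev⟩, rfl⟩
    subst hieq
    refine ⟨j, hj2, hjlen, hprev, ?_, rfl⟩
    rw [TinfCol_eq_fold hj2,
      tinf_fold_step (by have := hgt_le_sum c j; omega) (Tcol_none_of_gt (by omega))]
    rw [if_pos ⟨hasLeftNb_of_exists hex, by rw [hprev]; rfl⟩, hprev]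
    rfl
  · rintro ⟨j, hj2, hjlen, hprev, hstep, rfl⟩
    rw [TinfCol_eq_fold hj2,
      tinf_fold_step (by have := hgt_le_sum c j; omega) (Tcol_none_of_gt (by omega))] at hstep
    have hln : HasLeftNb c j := by
      by_cases hcond : HasLeftNb c j ∧ (TinfCol c (j - 1) (hgt c j)).isSome
      · exact hcond.1
      · exfalso
        rw [if_neg hcond, Option.none_or] at hstep
        have hinv : ColInv c (j - 1) := colInv_all (by omega)
        have := hinv.2.2.2.2 (hgt c j) (hgt c j + 1) t hprev hstep
        omega
    have hex := exists_of_hasLeftNb hln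
    have hmax : hgt c j ≤ maxHgt c j := by
      rcases hex with ⟨j', h1, h2, h3⟩
      rw [← h3]
      exact hgt_le_maxHgt h1 h2 (by omega)
    exact ⟨hgt c j, j, ⟨hj2, hjlen, hgt_pos hpos (by omega) hjlen, hmax, rfl, hex, hprev⟩, rfl⟩

lemma star_line_unique (hpos : ∀ x ∈ c, 0 < x) {t t' s : ℕ}
    (h1 : LineE c t s Lab.star) (h2 : LineE c t' s Lab.star) : t = t' := by
  obtain ⟨i, j, ⟨hj2, hjlen, hi1, hmax, hieq, hex, hprev⟩, hs⟩ := h1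
  obtain ⟨i', j', ⟨hj2', hjlen', hi1', hmax', hieq', hex', hprev'⟩, hs'⟩ := h2
  subst hieq hieq'
  rw [Tentry_hgt_eq c (by omega)] at hs
  rw [Tentry_hgt_eq c (by omega)] at hs'
  have hjj : j = j' := by
    by_contra hne
    rcases Nat.lt_or_ge j j' with hlt | hge
    · have := take_sum_lt hpos hlt (by omega)
      omega
    · have hlt : j' < j := by omega
      have := take_sum_lt hpos hlt (by omega)
      omega
  subst hjj
  rw [hprev] at hprev'
  exact Option.some_inj.mp hprev'

end Aux5
/-- (i) for each `t ∈ [1,n]`, the right-going lines of `ℓ(D)` labelled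
`∗` issuing from `b(t)` are exactly the lines joining `b(t)` to `b(s)` for
`s ∈ s_S(t)`; (ii) for each `s ∈ [1,n]` there is at most one left-going line of
`ℓ(D)` labelled `∗` ending at `b(s)`; it exists precisely when `s ∈ s_S(t)` for
some `t`, and in that case it joins `b(t)` to `b(s)`. -/
theorem statement4 (n : ℕ) (hn : 0 < n) (c : List ℕ) (hc : IsComposition c n) :
    (∀ t, 1 ≤ t → t ≤ n → ∀ s, LineE c t s Lab.star ↔ s ∈ StepsOf c t) ∧
    (∀ s, 1 ≤ s → s ≤ n →
      (∀ t t', LineE c t s Lab.star → LineE c t' s Lab.star → t = t') ∧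
      (∀ t, 1 ≤ t → t ≤ n → (LineE c t s Lab.star ↔ s ∈ StepsOf c t))) := by
  obtain ⟨hsum, hpos⟩ := hc
  refine ⟨fun t _ _ s => star_line_iff hpos t s,
    fun s _ _ => ⟨fun t t' h1 h2 => star_line_unique hpos h1 h2,
      fun t _ _ => star_line_iff hpos t s⟩⟩
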